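/- Any solution ū of Δū = λe^ū(e^ū−1)^{2p+1} + 4πΣ_{j=1}^M n_jδ_{p_j} on all of ℤⁿ with ū(x) → 0 as d(x,0) → ∞ satisfies ū ≤ 0 everywhere on ℤⁿ. -/
import Mathlib


open Finset

noncomputable section

/-- Vertices of the lattice graph `ℤⁿ`. -/
abbrev LV (n : ℕ) := Fin n → ℤ

/-- The set of neighbors of a vertex `x` in the lattice graph `ℤⁿ`
(the points differing from `x` by `±1` in exactly one coordinate). -/
def latNbrs {n : ℕ} (x : LV n) : Finset (LV n) :=
  Finset.image (fun p : Fin n × Bool =>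
    Function.update x p.1 (x p.1 + (if p.2 then 1 else -1))) Finset.univ

/-- The graph Laplacian on `ℤⁿ`: `Δu(x) = Σ_{y∼x} (u(y) - u(x))`. -/
def latLap {n : ℕ} (u : LV n → ℝ) (x : LV n) : ℝ :=
  ∑ y ∈ latNbrs x, (u y - u x)

/-- The boundary `∂Ω = {y ∉ Ω : ∃ x ∈ Ω, y ∼ x}` of a finite set `Ω ⊂ ℤⁿ`. -/
def latBdry {n : ℕ} (Ω : Finset (LV n)) : Finset (LV n) :=
  Ω.biUnion latNbrs \ Ω

/-- The closure `Ω̄ = Ω ∪ ∂Ω`. -/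
def latClosure {n : ℕ} (Ω : Finset (LV n)) : Finset (LV n) :=
  Ω ∪ latBdry Ω

/-- The bilinear Dirichlet form
`E_Ω(u,v) = (1/2) Σ_{x,y ∈ Ω̄, x∼y} (u(y)-u(x))(v(y)-v(x))`. -/
def latEnergy {n : ℕ} (Ω : Finset (LV n)) (u v : LV n → ℝ) : ℝ :=
  (1 / 2) * ∑ x ∈ latClosure Ω, ∑ y ∈ latNbrs x ∩ latClosure Ω,
    (u y - u x) * (v y - v x)

/-- The source term `h = 4π Σ_{j=1}^M n_j δ_{p_j}`. -/
def chernH {n M : ℕ} (nj : Fin M → ℕ) (pts : Fin M → LV n) (x : LV n) : ℝ :=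
  4 * Real.pi * ∑ j, (nj j : ℝ) * (if x = pts j then 1 else 0)

/-- Any solution `ū` of `Δū = λe^ū(e^ū-1)^{2p+1} + 4πΣn_jδ_{p_j}` on all of `ℤⁿ`
with `ū(x) → 0` as `d(x,0) → ∞` satisfies `ū ≤ 0` everywhere. -/
theorem global_solution_nonpos (n : ℕ) (hn : 2 ≤ n) (lam : ℝ) (hlam : 0 < lam) (p : ℕ)
    (M : ℕ) (nj : Fin M → ℕ) (hnj : ∀ j, 0 < nj j) (pts : Fin M → LV n)
    (u : LV n → ℝ)
    (hsol : ∀ x, latLap u x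
        = lam * Real.exp (u x) * (Real.exp (u x) - 1) ^ (2 * p + 1) + chernH nj pts x)
    (hlim : ∀ ε > 0, ∃ R : ℕ, ∀ x : LV n, R ≤ ∑ i, (x i).natAbs → |u x| < ε) :
    ∀ x, u x ≤ 0 := by
  by_contra h
  push_neg at h
  obtain ⟨x₀, hx₀⟩ := h
  obtain ⟨R, hR⟩ := hlim (u x₀) hx₀
  set B : Finset (LV n) := Finset.Icc (fun _ => -(R : ℤ)) (fun _ => (R : ℤ)) with hB
  -- points outside B have small |u|
  have hout : ∀ x : LV n, x ∉ B → |u x| < u x₀ := by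
    intro x hx
    apply hR
    have : ∃ i, (R : ℤ) < |x i| := by
      by_contra hc
      push_neg at hc
      apply hx
      rw [hB, Finset.mem_Icc]
      refine ⟨fun i => ?_, fun i => ?_⟩
      · simpa using (abs_le.mp (hc i)).1
      · simpa using (abs_le.mp (hc i)).2
    obtain ⟨i, hi⟩ := this
    have : (R : ℤ) ≤ (x i).natAbs := by
      rw [Int.abs_eq_natAbs] at hi; omega
    calc R ≤ (x i).natAbs := by exact_mod_cast this
      _ ≤ ∑ j, (x j).natAbs := Finset.single_le_sum (f := fun j => (x j).natAbs) (fun j _ => Nat.zero_le _) (mem_univ i)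
  have hx₀B : x₀ ∈ B := by
    by_contra hc
    have := hout x₀ hc
    have := le_abs_self (u x₀)
    linarith
  obtain ⟨x₁, hx₁B, hx₁max⟩ := Finset.exists_max_image B u ⟨x₀, hx₀B⟩
  have hx₁pos : 0 < u x₁ := lt_of_lt_of_le hx₀ (hx₁max x₀ hx₀B)
  have hglobal : ∀ y, u y ≤ u x₁ := by
    intro y
    by_cases hy : y ∈ B
    · exact hx₁max y hy
    · have := hout y hy
      have := le_abs_self (u y)
      have := hx₁max x₀ hx₀B
      linarith
  have hlap : latLap u x₁ ≤ 0 := by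
    apply Finset.sum_nonpos
    intro y _
    linarith [hglobal y]
  have hpos : 0 < lam * Real.exp (u x₁) * (Real.exp (u x₁) - 1) ^ (2 * p + 1)
      + chernH nj pts x₁ := by
    have h1 : 0 < Real.exp (u x₁) - 1 := by
      nlinarith [Real.add_one_le_exp (u x₁)]
    have h2 : 0 < lam * Real.exp (u x₁) * (Real.exp (u x₁) - 1) ^ (2 * p + 1) :=
      mul_pos (mul_pos hlam (Real.exp_pos _)) (pow_pos h1 _)
    have h3 : 0 ≤ chernH nj pts x₁ := by
      unfold chernH
      apply mul_nonneg (by positivity)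
      apply Finset.sum_nonneg
      intro j _
      positivity
    linarith
  have := hsol x₁
  linarith
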